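/- Let H, φ, φ' be real numbers with φ' = −6φH³ + ε·√((6φH³)² + 3H²) where ε = 1 or ε = −1. Then 2 − 8Hφφ' + 24H⁴φ² > 0. -/
import Mathlib

theorem denom_pos (H φ φ' ε : ℝ) (hε : ε = 1 ∨ ε = -1)
    (hφ' : φ' = -6 * φ * H ^ 3 + ε * Real.sqrt ((6 * φ * H ^ 3) ^ 2 + 3 * H ^ 2)) :
    2 - 8 * H * φ * φ' + 24 * H ^ 4 * φ ^ 2 > 0 := by
  set s := Real.sqrt ((6 * φ * H ^ 3) ^ 2 + 3 * H ^ 2) with hsdef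
  have hs0 : 0 ≤ s := Real.sqrt_nonneg _
  have hs : s ^ 2 = (6 * φ * H ^ 3) ^ 2 + 3 * H ^ 2 := by
    rw [hsdef, Real.sq_sqrt]; positivity
  rcases hε with h | h <;> subst h <;> subst hφ' <;>
    nlinarith [sq_nonneg (2 + 72 * (H*φ)^2 * H^2 - 8 * H * φ * s),
      sq_nonneg (2 + 72 * (H*φ)^2 * H^2 + 8 * H * φ * s),
      sq_nonneg (H*φ), sq_nonneg (H^2*φ), sq_nonneg s, hs0, hs,
      sq_nonneg (H*φ*s), mul_self_nonneg ((H*φ)^2)]
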